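/- Let f : ℝ → ℝ be monotone (nondecreasing) with f(x) > 0 for all x, and define the reweighted policy f(R)π by (f(R)π)(τ) = f(R(τ))π(τ)/E_π[f∘R], where E_π[f∘R] = Σ_τ f(R(τ))π(τ). Then J(f(R)π) = J(π) + Cov_π(R, f∘R)/E_π[f∘R], where Cov_π(R, f∘R) = Σ_τ π(τ) R(τ) f(R(τ)) − J(π)·E_π[f∘R]; in particular Cov_π(R, f∘R) ≥ 0 and hence J(f(R)π) ≥ J(π). -/

import Mathlib

/-- Expected return `J(π) = ∑ τ, R τ * π τ`. -/
noncomputable def Jexp {T : Type*} [Fintype T] (R π : T → ℝ) : ℝ := ∑ τ, R τ * π τ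

/-- Expectation of `f ∘ R` under `π`: `E_π[f∘R] = ∑ τ, f (R τ) * π τ`. -/
noncomputable def expFR {T : Type*} [Fintype T] (f : ℝ → ℝ) (R π : T → ℝ) : ℝ :=
  ∑ τ, f (R τ) * π τ

/-- Reweighted policy `(f(R)π)(τ) = f (R τ) * π τ / E_π[f∘R]`. -/
noncomputable def reweightF {T : Type*} [Fintype T] (f : ℝ → ℝ) (R π : T → ℝ) (τ : T) : ℝ :=
  f (R τ) * π τ / expFR f R π

/-- Covariance `Cov_π(R, f∘R) = ∑ τ, π τ * R τ * f (R τ) − J(π) * E_π[f∘R]`. -/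
noncomputable def covRFR {T : Type*} [Fintype T] (f : ℝ → ℝ) (R π : T → ℝ) : ℝ :=
  (∑ τ, π τ * R τ * f (R τ)) - Jexp R π * expFR f R π

/-- For monotone positive `f`: `J(f(R)π) = J(π) + Cov_π(R, f∘R) / E_π[f∘R]`,
`Cov_π(R, f∘R) ≥ 0`, and hence `J(f(R)π) ≥ J(π)`. -/
theorem improvement_monotone_transform
    {T : Type*} [Fintype T] [Nonempty T]
    (R π : T → ℝ) (f : ℝ → ℝ) (hR : ∀ τ, 0 < R τ)
    (hπ : ∀ τ, 0 ≤ π τ) (hπsum : ∑ τ, π τ = 1)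
    (hf : Monotone f) (hfpos : ∀ x, 0 < f x) :
    Jexp R (reweightF f R π) = Jexp R π + covRFR f R π / expFR f R π ∧
      0 ≤ covRFR f R π ∧
      Jexp R π ≤ Jexp R (reweightF f R π) := by
  classical
  -- positivity of the normalizer
  have hE : 0 < expFR f R π := by
    have h1 : ∃ τ : T, 0 < π τ := by
      by_contra h
      push_neg at h
      have : ∑ τ, π τ = 0 := Finset.sum_eq_zero fun τ _ => le_antisymm (h τ) (hπ τ)
      rw [hπsum] at this; norm_num at this
    obtain ⟨τ₀, hτ₀⟩ := h1
    exact Finset.sum_pos' (fun τ _ => mul_nonneg (hfpos _).le (hπ τ))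
      ⟨τ₀, Finset.mem_univ _, mul_pos (hfpos _) hτ₀⟩
  have hEne : expFR f R π ≠ 0 := ne_of_gt hE
  -- the equality part
  have hL : Jexp R (reweightF f R π) = (∑ τ, π τ * R τ * f (R τ)) / expFR f R π := by
    unfold Jexp reweightF
    rw [eq_div_iff hEne, Finset.sum_mul]
    exact Finset.sum_congr rfl fun τ _ => by field_simp
  have heq : Jexp R (reweightF f R π) = Jexp R π + covRFR f R π / expFR f R π := by
    rw [hL]; unfold covRFR; field_simp; ring
  -- covariance nonnegativity via the double-sum identity
  have key : ∀ a b : T, 0 ≤ π a * π b * ((R a - R b) * (f (R a) - f (R b))) := by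
    intro a b
    apply mul_nonneg (mul_nonneg (hπ a) (hπ b))
    rcases le_total (R a) (R b) with h | h
    · nlinarith [hf h]
    · nlinarith [hf h]
  have hdd : 0 ≤ ∑ a : T, ∑ b : T, π a * π b * ((R a - R b) * (f (R a) - f (R b))) :=
    Finset.sum_nonneg fun a _ => Finset.sum_nonneg fun b _ => key a b
  have hiden : ∑ a : T, ∑ b : T, π a * π b * ((R a - R b) * (f (R a) - f (R b)))
      = 2 * covRFR f R π := by
    have expand : ∀ a b : T, π a * π b * ((R a - R b) * (f (R a) - f (R b)))
        = (π a * R a * f (R a)) * π b + π a * (π b * R b * f (R b))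
          - (R a * π a) * (f (R b) * π b) - (f (R a) * π a) * (R b * π b) := by
      intro a b; ring
    simp only [expand, Finset.sum_sub_distrib, Finset.sum_add_distrib,
      ← Finset.sum_mul, ← Finset.mul_sum]
    unfold covRFR Jexp expFR
    rw [hπsum]
    ring
  have hcov : 0 ≤ covRFR f R π := by linarith [hdd, hiden.symm ▸ hdd]
  refine ⟨heq, hcov, ?_⟩
  rw [heq]
  have : 0 ≤ covRFR f R π / expFR f R π := div_nonneg hcov hE.le
  linarith
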